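/- The TWATSP-ST has relatively complete recourse: let x : A → {0,1} be such that the arcs with x_{ij} = 1 form a directed Hamiltonian cycle on V through the depot 0 (equivalently, x satisfies the degree and subtour-elimination constraints), let y^s, y^e : V⁺ → ℝ_{≥0} be any time window assignment, let t : A → ℝ_{≥0} be any realized travel times, and suppose M ≥ Σ_{(i,j)∈A} t_{ij} + 2 Σ_{j∈V⁺} s_j. Then there exist w : V → ℝ with w_0 = t_0 and w_j ≥ 0 for j ∈ V⁺, e, l : V⁺ → ℝ_{≥0}, and o ∈ ℝ_{≥0} satisfying all second-stage constraints: w_j ≥ w_i + t_{ij} + s_j − (1 − x_{ij})M for all (i,j) ∈ A with j ∈ V⁺; e_j ≥ y^s_j − w_j − s_j and l_j ≥ w_j − y^e_j for all j ∈ V⁺; and o ≥ w_j + t_{j0} − T for all j ∈ V⁺. Hence the second-stage problem is feasible for every feasible first-stage decision and every travel-time scenario. -/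

import Mathlib

open Finset
open Fin.NatCast

/-- Relatively complete recourse of the TWATSP-ST: for any routing decision `x` whose
arcs with `x i j = 1` form a directed Hamiltonian cycle through the depot `0` (encoded by
a permutation `r` of `Fin (n+1)` enumerating the tour, with `r 0 = 0`), any time window
assignment `ys, ye ≥ 0`, any realized nonnegative travel times `t`, and any big-M constant
with `M ≥ Σ_{(i,j)∈A} t_{ij} + 2 Σ_{j∈V⁺} s_j`, the second-stage problem admits a feasible
solution `(w, e, l, o)`. -/
theorem twatsp_relatively_complete_recourse
    (n : ℕ)
    (x : Fin (n + 1) → Fin (n + 1) → ℝ)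
    (hx01 : ∀ i j, x i j = 0 ∨ x i j = 1)
    (r : Equiv.Perm (Fin (n + 1))) (hr0 : r 0 = 0)
    (hroute : ∀ i j : Fin (n + 1), i ≠ j →
      (x i j = 1 ↔ ∃ p : Fin (n + 1), r p = i ∧ r (p + 1) = j))
    (s : Fin (n + 1) → ℝ) (hs : ∀ j, 0 ≤ s j)
    (ys ye : Fin (n + 1) → ℝ) (hys : ∀ j, j ≠ 0 → 0 ≤ ys j) (hye : ∀ j, j ≠ 0 → 0 ≤ ye j)
    (t : Fin (n + 1) → Fin (n + 1) → ℝ) (ht : ∀ i j, 0 ≤ t i j)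
    (t₀ : ℝ) (ht₀ : 0 ≤ t₀) (T : ℝ) (M : ℝ)
    (hM : (∑ i, ∑ j ∈ Finset.univ.erase i, t i j) + 2 * ∑ j ∈ Finset.univ.erase 0, s j ≤ M) :
    ∃ (w : Fin (n + 1) → ℝ) (e l : Fin (n + 1) → ℝ) (o : ℝ),
      w 0 = t₀ ∧
      (∀ j, j ≠ 0 → 0 ≤ w j) ∧
      (∀ j, j ≠ 0 → 0 ≤ e j) ∧
      (∀ j, j ≠ 0 → 0 ≤ l j) ∧
      0 ≤ o ∧
      (∀ i j, i ≠ j → j ≠ 0 → w i + t i j + s j - (1 - x i j) * M ≤ w j) ∧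
      (∀ j, j ≠ 0 → ys j - w j - s j ≤ e j) ∧
      (∀ j, j ≠ 0 → w j - ye j ≤ l j) ∧
      (∀ j, j ≠ 0 → w j + t j 0 - T ≤ o) := by
  classical
  -- cumulative arrival-time function along the tour
  set f : ℕ → ℝ := fun k => ∑ m ∈ Finset.range k,
      (t (r (m : Fin (n+1))) (r ((m : Fin (n+1)) + 1)) + s (r ((m : Fin (n+1)) + 1))) with hfdef
  have hstep : ∀ k : ℕ, f (k+1) = f k +
      (t (r (k : Fin (n+1))) (r ((k : Fin (n+1)) + 1)) + s (r ((k : Fin (n+1)) + 1))) := by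
    intro k; simp [hfdef, Finset.sum_range_succ]
  have hfnonneg : ∀ k, 0 ≤ f k := fun k =>
    Finset.sum_nonneg fun m _ => add_nonneg (ht _ _) (hs _)
  have hmono : Monotone f := monotone_nat_of_le_succ fun k => by
    have h1 := ht (r (k : Fin (n+1))) (r ((k : Fin (n+1)) + 1))
    have h2 := hs (r ((k : Fin (n+1)) + 1))
    rw [hstep]; linarith
  set w : Fin (n+1) → ℝ := fun j => t₀ + f (r.symm j).val with hwdef
  have hrs0 : r.symm 0 = 0 := (Equiv.symm_apply_eq r).2 hr0.symm
  have hw0 : w 0 = t₀ := by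
    simp [hwdef, hrs0, hfdef]
  have hwnn : ∀ j : Fin (n+1), 0 ≤ w j := fun j =>
    add_nonneg ht₀ (hfnonneg _)
  -- key bound for arcs not on the tour
  have hbound : ∀ i j : Fin (n+1), i ≠ j → j ≠ 0 → x i j = 0 →
      f n + t i j + s j ≤ M := by
    intro i j hij hj0 hx0
    have hn : 0 < n := by
      rcases Nat.eq_zero_or_pos n with h | h
      · subst h; exact absurd (Fin.ext (show i.val = j.val by omega)) hij
      · exact h
    have hone : ((1 : Fin (n+1)) : ℕ) = 1 := by
      rw [Fin.val_one']; exact Nat.mod_eq_of_lt (by omega)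
    have hcastval : ∀ m : ℕ, m < n + 1 → ((m : Fin (n+1)) : ℕ) = m := fun m hm =>
      Fin.val_cast_of_lt hm
    -- successor values on the route: `↑m + 1 = ↑(m+1)` for `m < n`
    have hsucc : ∀ m : ℕ, m < n → ((m : Fin (n+1)) + 1) = ((m + 1 : ℕ) : Fin (n+1)) := by
      intro m hm; push_cast; ring
    have hne_succ : ∀ m : ℕ, m < n → r (m : Fin (n+1)) ≠ r ((m : Fin (n+1)) + 1) := by
      intro m hm h
      have h2 : (m : Fin (n+1)) = (m : Fin (n+1)) + 1 := r.injective h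
      have h3 : ((m : Fin (n+1)) : ℕ) = (((m : Fin (n+1)) + 1 : Fin (n+1)) : ℕ) := by rw [← h2]
      rw [hsucc m hm, hcastval m (by omega), hcastval (m+1) (by omega)] at h3
      omega
    have hsuccne0 : ∀ m : ℕ, m < n → r ((m : Fin (n+1)) + 1) ≠ 0 := by
      intro m hm h
      have h2 : ((m : Fin (n+1)) + 1) = 0 := by
        have := r.injective (h.trans hr0.symm); exact this
      have h3 : (((m : Fin (n+1)) + 1 : Fin (n+1)) : ℕ) = 0 := by rw [h2]; rfl
      rw [hsucc m hm, hcastval (m+1) (by omega)] at h3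
      omega
    -- split f n into travel and service parts
    have hsplit : f n = (∑ m ∈ Finset.range n, t (r (m : Fin (n+1))) (r ((m : Fin (n+1)) + 1)))
        + ∑ m ∈ Finset.range n, s (r ((m : Fin (n+1)) + 1)) := by
      exact Finset.sum_add_distrib
    -- travel part
    set P : Finset ((_ : Fin (n+1)) × Fin (n+1)) := Finset.univ.sigma fun i => Finset.univ.erase i
      with hPdef
    have hAP : (∑ i, ∑ j ∈ Finset.univ.erase i, t i j) = ∑ p ∈ P, t p.1 p.2 := by
      rw [hPdef, Finset.sum_sigma]
    set g : ℕ → (_ : Fin (n+1)) × Fin (n+1) :=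
      fun m => ⟨r (m : Fin (n+1)), r ((m : Fin (n+1)) + 1)⟩ with hgdef
    have hginj : Set.InjOn g (Finset.range n) := by
      intro a ha b hb hab
      simp only [Finset.coe_range, Set.mem_Iio] at ha hb
      have h1 : r (a : Fin (n+1)) = r (b : Fin (n+1)) := congrArg Sigma.fst hab
      have h2 : (a : Fin (n+1)) = (b : Fin (n+1)) := r.injective h1
      have h3 := congrArg Fin.val h2
      rw [hcastval a (by omega), hcastval b (by omega)] at h3
      exact h3
    have hgmem : ∀ m ∈ Finset.range n, g m ∈ P := by
      intro m hm
      rw [Finset.mem_range] at hm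
      rw [hPdef]
      refine Finset.mem_sigma.2 ⟨Finset.mem_univ _, Finset.mem_erase.2 ⟨?_, Finset.mem_univ _⟩⟩
      exact fun h => hne_succ m hm h.symm
    have hijnot : (⟨i, j⟩ : (_ : Fin (n+1)) × Fin (n+1)) ∉ (Finset.range n).image g := by
      intro h
      rcases Finset.mem_image.1 h with ⟨m, hm, hgm⟩
      have h1 : r (m : Fin (n+1)) = i := congrArg Sigma.fst hgm
      have h2 : r ((m : Fin (n+1)) + 1) = j := by
        have := congrArg Sigma.snd hgm; exact this
      have : x i j = 1 := (hroute i j hij).2 ⟨(m : Fin (n+1)), h1, h2⟩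
      rw [hx0] at this; norm_num at this
    have htpart : (∑ m ∈ Finset.range n, t (r (m : Fin (n+1))) (r ((m : Fin (n+1)) + 1)))
        + t i j ≤ ∑ i, ∑ j ∈ Finset.univ.erase i, t i j := by
      rw [hAP]
      have h1 : ∑ m ∈ Finset.range n, t (r (m : Fin (n+1))) (r ((m : Fin (n+1)) + 1))
          = ∑ p ∈ (Finset.range n).image g, t p.1 p.2 := by
        rw [Finset.sum_image (fun a ha b hb h => hginj ha hb h)]
      have h2 : ∑ p ∈ insert (⟨i,j⟩ : (_ : Fin (n+1)) × Fin (n+1)) ((Finset.range n).image g),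
            t p.1 p.2 = t i j + ∑ p ∈ (Finset.range n).image g, t p.1 p.2 :=
        Finset.sum_insert hijnot
      rw [h1, add_comm, ← h2]
      apply Finset.sum_le_sum_of_subset_of_nonneg
      · intro p hp
        rcases Finset.mem_insert.1 hp with h | h
        · subst h
          exact Finset.mem_sigma.2 ⟨Finset.mem_univ _,
            Finset.mem_erase.2 ⟨fun h => hij h.symm, Finset.mem_univ _⟩⟩
        · rcases Finset.mem_image.1 h with ⟨m, hm, hgm⟩
          exact hgm ▸ hgmem m hm
      · intro p _ _; exact ht _ _
    -- service part
    have hspart1 : (∑ m ∈ Finset.range n, s (r ((m : Fin (n+1)) + 1)))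
        ≤ ∑ j ∈ Finset.univ.erase 0, s j := by
      set h : ℕ → Fin (n+1) := fun m => r ((m : Fin (n+1)) + 1) with hhdef
      have hinj : Set.InjOn h (Finset.range n) := by
        intro a ha b hb hab
        simp only [Finset.coe_range, Set.mem_Iio] at ha hb
        have h1 : ((a : Fin (n+1)) + 1) = ((b : Fin (n+1)) + 1) := r.injective hab
        have h2 := congrArg Fin.val h1
        rw [hsucc a ha, hsucc b hb, hcastval (a+1) (by omega), hcastval (b+1) (by omega)] at h2
        omega
      calc (∑ m ∈ Finset.range n, s (h m)) = ∑ j ∈ (Finset.range n).image h, s j := by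
              rw [Finset.sum_image (fun a ha b hb hh => hinj ha hb hh)]
        _ ≤ ∑ j ∈ Finset.univ.erase 0, s j := by
              apply Finset.sum_le_sum_of_subset_of_nonneg
              · intro p hp
                rcases Finset.mem_image.1 hp with ⟨m, hm, hhm⟩
                rw [Finset.mem_range] at hm
                exact Finset.mem_erase.2 ⟨hhm ▸ hsuccne0 m hm, Finset.mem_univ _⟩
              · intro p _ _; exact hs _
    have hspart2 : s j ≤ ∑ j ∈ Finset.univ.erase 0, s j :=
      Finset.single_le_sum (fun k _ => hs k)
        (Finset.mem_erase.2 ⟨hj0, Finset.mem_univ _⟩)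
    rw [hsplit]
    linarith
  -- verify the route constraints
  have hmain : ∀ i j, i ≠ j → j ≠ 0 → w i + t i j + s j - (1 - x i j) * M ≤ w j := by
    intro i j hij hj0
    rcases hx01 i j with hx | hx
    · -- arc not used
      have h1 : w i ≤ t₀ + f n := by
        rw [hwdef]
        exact add_le_add_right (hmono (by omega : ((r.symm i).val ≤ n))) t₀
      have h2 : t₀ ≤ w j := le_add_of_nonneg_right (hfnonneg _)
      have h3 := hbound i j hij hj0 hx
      rw [hx]
      linarith
    · -- arc on the tour
      rcases (hroute i j hij).1 hx with ⟨p, hpi, hpj⟩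
      have hn : 0 < n := by
        rcases Nat.eq_zero_or_pos n with h | h
        · subst h; exact absurd (Fin.ext (show i.val = j.val by omega)) hij
        · exact h
      have hp1ne : p + 1 ≠ 0 := by
        intro h; apply hj0; rw [← hpj, h, hr0]
      have hone : ((1 : Fin (n+1)) : ℕ) = 1 := by
        rw [Fin.val_one']; exact Nat.mod_eq_of_lt (by omega)
      have hval : ((p + 1 : Fin (n+1)) : ℕ) = p.val + 1 := by
        have h1 : ((p + 1 : Fin (n+1)) : ℕ) = (p.val + 1) % (n+1) := by
          rw [Fin.add_def]; simp [hone]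
        have h2 : (p.val + 1) % (n+1) ≠ 0 := by
          intro h
          apply hp1ne
          apply Fin.ext
          rw [h1, h]; rfl
        have h3 : p.val < n + 1 := p.isLt
        rw [h1]
        rcases Nat.lt_or_ge (p.val + 1) (n+1) with h | h
        · exact Nat.mod_eq_of_lt h
        · exfalso; apply h2; have : p.val + 1 = n + 1 := by omega
          rw [this, Nat.mod_self]
      have hsymj : r.symm j = p + 1 := (Equiv.symm_apply_eq r).2 hpj.symm
      have hsymi : r.symm i = p := (Equiv.symm_apply_eq r).2 hpi.symm
      have hcast : ((p.val : ℕ) : Fin (n+1)) = p := Fin.cast_val_eq_self p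
      have hwj : w j = w i + t i j + s j := by
        rw [hwdef]
        simp only [hsymj, hsymi, hval]
        rw [hstep p.val, hcast, hpi, hpj]
        ring
      rw [hwj, hx]
      norm_num
  -- assemble the solution
  refine ⟨w, fun j => max 0 (ys j - w j - s j), fun j => max 0 (w j - ye j),
    max 0 (Finset.univ.sup' ⟨0, Finset.mem_univ 0⟩ fun j => w j + t j 0 - T),
    hw0, fun j _ => hwnn j, fun j _ => le_max_left _ _, fun j _ => le_max_left _ _,
    le_max_left _ _, hmain, fun j _ => le_max_right _ _, fun j _ => le_max_right _ _,
    fun j _ => ?_⟩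
  exact le_trans (Finset.le_sup' (fun j => w j + t j 0 - T) (Finset.mem_univ j)) (le_max_right _ _)
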